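/- For every integer M ≥ 2, all collision-free utilities u_n > 0, and all P ∈ (0,1)^M, the sum log rate satisfies Σ_{n=1}^{M} log( u_n · P_n · Π_{i≠n}(1 − P_i) ) ≤ Σ_{n=1}^{M} log u_n − M·log M + M·(M−1)·log(1 − 1/M). -/

import Mathlib

lemma key_pointwise (c : ℝ) (hc : 2 ≤ c) {p : ℝ} (hp0 : 0 < p) (hp1 : p < 1) :
    Real.log p + (c - 1) * Real.log (1 - p) ≤
      -Real.log c + (c - 1) * Real.log (1 - 1 / c) := by
  have hc0 : (0:ℝ) < c := by linarith
  have hq : (0:ℝ) < 1 - 1 / c := by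
    rw [sub_pos, div_lt_one hc0]; linarith
  have A := Real.log_le_sub_one_of_pos (mul_pos hc0 hp0)
  rw [Real.log_mul hc0.ne' hp0.ne'] at A
  have hp1' : (0:ℝ) < 1 - p := by linarith
  have B := Real.log_le_sub_one_of_pos (div_pos hp1' hq)
  rw [Real.log_div hp1'.ne' hq.ne'] at B
  have B' := mul_le_mul_of_nonneg_left B (by linarith : (0:ℝ) ≤ c - 1)
  have key2 : (c * p - 1) + (c - 1) * ((1 - p) / (1 - 1 / c) - 1) = 0 := by
    have h1 : c - 1 ≠ 0 := by linarith
    field_simp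
    ring
  nlinarith [B', A, key2]

/-- for all `P ∈ (0,1)^M`,
`∑ log (u_n P_n ∏_{i≠n} (1-P_i)) ≤ ∑ log u_n - M log M + M (M-1) log (1 - 1/M)`. -/
theorem sum_log_rate_upper_bound (M : ℕ) (hM : 2 ≤ M) (u : Fin M → ℝ) (hu : ∀ n, 0 < u n)
    (P : Fin M → ℝ) (hP : ∀ n, P n ∈ Set.Ioo (0:ℝ) 1) :
    ∑ n : Fin M,
        Real.log (u n * P n * ∏ i ∈ Finset.univ.filter (fun i => i ≠ n), (1 - P i)) ≤
      ∑ n : Fin M, Real.log (u n) - (M : ℝ) * Real.log (M : ℝ) +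
        (M : ℝ) * ((M : ℝ) - 1) * Real.log (1 - 1 / (M : ℝ)) := by
  have hMc : (2:ℝ) ≤ (M:ℝ) := by exact_mod_cast hM
  have hpos : ∀ i : Fin M, (0:ℝ) < 1 - P i := fun i => by linarith [(hP i).2]
  set S := ∑ i : Fin M, Real.log (1 - P i) with hS
  have hterm : ∀ n : Fin M,
      Real.log (u n * P n * ∏ i ∈ Finset.univ.filter (fun i => i ≠ n), (1 - P i)) =
        Real.log (u n) + (Real.log (P n) + (S - Real.log (1 - P n))) := by
    intro n
    have hprodpos : (0:ℝ) < ∏ i ∈ Finset.univ.filter (fun i => i ≠ n), (1 - P i) :=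
      Finset.prod_pos fun i _ => hpos i
    rw [Real.log_mul (mul_pos (hu n) (hP n).1).ne' hprodpos.ne',
        Real.log_mul (hu n).ne' (hP n).1.ne',
        Real.log_prod (fun i _ => (hpos i).ne')]
    have : (Finset.univ.filter (fun i => i ≠ n)) = Finset.univ.erase n := by
      ext i; simp [Finset.mem_erase, and_comm]
    rw [this, Finset.sum_erase_eq_sub (Finset.mem_univ n)]
    ring
  rw [Finset.sum_congr rfl (fun n _ => hterm n), Finset.sum_add_distrib]
  have hrw : ∑ n : Fin M, (Real.log (P n) + (S - Real.log (1 - P n))) =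
      ∑ n : Fin M, (Real.log (P n) + ((M:ℝ) - 1) * Real.log (1 - P n)) := by
    have h2 : ∑ n : Fin M, ((M:ℝ) - 1) * Real.log (1 - P n) = ((M:ℝ) - 1) * S :=
      (Finset.mul_sum _ _ _).symm
    rw [Finset.sum_add_distrib, Finset.sum_add_distrib, Finset.sum_sub_distrib, h2]
    simp only [Finset.sum_const, Finset.card_univ, Fintype.card_fin, nsmul_eq_mul, ← hS]
    ring
  rw [hrw]
  have hbound : ∑ n : Fin M, (Real.log (P n) + ((M:ℝ) - 1) * Real.log (1 - P n)) ≤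
      ∑ n : Fin M, (-Real.log (M:ℝ) + ((M:ℝ) - 1) * Real.log (1 - 1 / (M:ℝ))) :=
    Finset.sum_le_sum fun n _ => key_pointwise _ hMc (hP n).1 (hP n).2
  have : ∑ n : Fin M, (-Real.log (M:ℝ) + ((M:ℝ) - 1) * Real.log (1 - 1 / (M:ℝ))) =
      -(M:ℝ) * Real.log (M:ℝ) + (M:ℝ) * ((M:ℝ) - 1) * Real.log (1 - 1 / (M:ℝ)) := by
    rw [Finset.sum_const, Finset.card_univ, Fintype.card_fin, nsmul_eq_mul]
    ring
  linarith [hbound, this.le, this.ge]
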